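/- Let x : [0,T] → (ℝ^d)^N solve ẋ_i = f_i(𝒟x) + Σ_j f_{ij}(𝒟x)x_j with x_i(0) = x_i^0, and let y : [0,T] → (ℝ^k)^N solve ẏ_i = M f_i(𝒟'y) + Σ_j f_{ij}(𝒟'y)y_j with y_i(0) = M x_i^0, where M ∈ ℝ^{k×d}. Assume: (a) the Lipschitz/boundedness conditions |f_i(a)-f_i(b)| ≤ L‖a-b‖_∞, Σ_j|f_{ij}(a)| ≤ L', Σ_j|f_{ij}(a)-f_{ij}(b)| ≤ L''‖a-b‖_∞; (b) max_{t,i,j} ‖x_i(t)-x_j(t)‖₂ ≤ α; (c) (1-ε)‖x_i(t)-x_j(t)‖₂ ≤ ‖Mx_i(t)-Mx_j(t)‖₂ ≤ (1+ε)‖x_i(t)-x_j(t)‖₂ for all t, i, j; and (d) max_t max_i ‖y_i(t)‖₂ ≤ β. Then ℰ(t) = max_i ‖y_i(t) - M x_i(t)‖₂ satisfies ℰ(t) ≤ ε·α·t·(L‖M‖ + L''β)·exp((2L‖M‖ + 2βL'' + L')·t) for all t ∈ [0,T]. -/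

import Mathlib

open Set Real

noncomputable section

/-- The adjacency matrix of a configuration of `N` points. -/
def adjMat {N m : ℕ} (z : Fin N → EuclideanSpace ℝ (Fin m)) : Matrix (Fin N) (Fin N) ℝ :=
  Matrix.of fun i j => ‖z i - z j‖

/-- The maximal absolute entry of a matrix. -/
def matSup {N : ℕ} (A : Matrix (Fin N) (Fin N) ℝ) : ℝ := ⨆ i, ⨆ j, |A i j|

lemma matSup_le {N : ℕ} {A : Matrix (Fin N) (Fin N) ℝ} {c : ℝ} (hc : 0 ≤ c)
    (h : ∀ i j, |A i j| ≤ c) : matSup A ≤ c :=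
  Real.iSup_le (fun i => Real.iSup_le (h i) hc) hc

lemma exp_sub_one_le' {s : ℝ} (hs : 0 ≤ s) : Real.exp s - 1 ≤ s * Real.exp s := by
  have he := Real.exp_pos s
  have h := Real.add_one_le_exp (-s)
  rw [Real.exp_neg] at h
  have h2 : (-s + 1) * Real.exp s ≤ (Real.exp s)⁻¹ * Real.exp s :=
    mul_le_mul_of_nonneg_right h he.le
  rw [inv_mul_cancel₀ he.ne'] at h2
  nlinarith

set_option maxHeartbeats 1000000 in
theorem stmt_14 {N d k : ℕ} (T : ℝ) (hT : 0 < T)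
    (f : Fin N → Matrix (Fin N) (Fin N) ℝ → EuclideanSpace ℝ (Fin d))
    (F : Fin N → Fin N → Matrix (Fin N) (Fin N) ℝ → ℝ)
    (M : EuclideanSpace ℝ (Fin d) →L[ℝ] EuclideanSpace ℝ (Fin k))
    (x : ℝ → Fin N → EuclideanSpace ℝ (Fin d))
    (y : ℝ → Fin N → EuclideanSpace ℝ (Fin k))
    (ε α β L L' L'' : ℝ)
    (hε : 0 < ε) (hα : 0 < α) (hβ : 0 < β)
    (hLpos : 0 < L) (hL'pos : 0 < L') (hL''pos : 0 < L'')
    -- the dynamical systems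
    (hx : ∀ t ∈ Icc (0 : ℝ) T, ∀ i, HasDerivAt (fun s => x s i)
      (f i (adjMat (x t)) + ∑ j, F i j (adjMat (x t)) • x t j) t)
    (hy0 : ∀ i, y 0 i = M (x 0 i))
    (hy : ∀ t ∈ Icc (0 : ℝ) T, ∀ i, HasDerivAt (fun s => y s i)
      (M (f i (adjMat (y t))) + ∑ j, F i j (adjMat (y t)) • y t j) t)
    -- (a) Lipschitz/boundedness conditions
    (hfLip : ∀ i a b, ‖f i a - f i b‖ ≤ L * matSup (a - b))
    (hFbd : ∀ i a, ∑ j, |F i j a| ≤ L')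
    (hFLip : ∀ i a b, ∑ j, |F i j a - F i j b| ≤ L'' * matSup (a - b))
    -- (b) a priori bound on mutual distances
    (hbd : ∀ t ∈ Icc (0 : ℝ) T, ∀ i j, ‖x t i - x t j‖ ≤ α)
    -- (c) quasi-isometry of M along the trajectories
    (hM : ∀ t ∈ Icc (0 : ℝ) T, ∀ i j,
      (1 - ε) * ‖x t i - x t j‖ ≤ ‖M (x t i) - M (x t j)‖ ∧
      ‖M (x t i) - M (x t j)‖ ≤ (1 + ε) * ‖x t i - x t j‖)
    -- (d) a priori bound on the projected trajectories
    (hybd : ∀ t ∈ Icc (0 : ℝ) T, ∀ i, ‖y t i‖ ≤ β) :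
    ∀ t ∈ Icc (0 : ℝ) T, (⨆ i, ‖y t i - M (x t i)‖) ≤
      ε * α * t * (L * ‖M‖ + L'' * β) *
        Real.exp ((2 * L * ‖M‖ + 2 * β * L'' + L') * t) := by
  set K : ℝ := 2 * L * ‖M‖ + 2 * β * L'' + L' with hKdef
  set c : ℝ := ε * α * (L * ‖M‖ + L'' * β) with hcdef
  have hMnn : (0 : ℝ) ≤ ‖M‖ := norm_nonneg M
  have hKpos : 0 < K := by nlinarith
  have hcnn : 0 ≤ c := by positivity
  set Z : ℝ → (Fin N → EuclideanSpace ℝ (Fin k)) := fun s i => y s i - M (x s i) with hZdef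
  set Z' : ℝ → (Fin N → EuclideanSpace ℝ (Fin k)) := fun t i =>
    (M (f i (adjMat (y t))) + ∑ j, F i j (adjMat (y t)) • y t j)
      - (M (f i (adjMat (x t))) + ∑ j, F i j (adjMat (x t)) • M (x t j)) with hZ'def
  have hZderiv : ∀ t ∈ Icc (0 : ℝ) T, HasDerivAt Z (Z' t) t := by
    intro t ht
    rw [hasDerivAt_pi]
    intro i
    have h2 : HasDerivAt (fun s => M (x s i))
        (M (f i (adjMat (x t)) + ∑ j, F i j (adjMat (x t)) • x t j)) t :=
      M.hasFDerivAt.comp_hasDerivAt t (hx t ht i)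
    have h3 : HasDerivAt (fun s => Z s i) _ t := (hy t ht i).sub h2
    simpa [Z', map_add, map_sum, map_smul] using h3
  have key : ∀ t ∈ Icc (0 : ℝ) T, ‖Z' t‖ ≤ K * ‖Z t‖ + c := by
    intro t ht
    have hEnn : (0 : ℝ) ≤ ‖Z t‖ := norm_nonneg _
    have hEi : ∀ j, ‖y t j - M (x t j)‖ ≤ ‖Z t‖ := fun j => norm_le_pi_norm (Z t) j
    -- bound on the sup-distance of the adjacency matrices
    have hS : matSup (adjMat (y t) - adjMat (x t)) ≤ 2 * ‖Z t‖ + ε * α := by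
      apply matSup_le (by positivity)
      intro i j
      have h1 : |‖y t i - y t j‖ - ‖M (x t i) - M (x t j)‖|
          ≤ ‖(y t i - y t j) - (M (x t i) - M (x t j))‖ := abs_norm_sub_norm_le _ _
      have h2 : ‖(y t i - y t j) - (M (x t i) - M (x t j))‖
          ≤ ‖y t i - M (x t i)‖ + ‖y t j - M (x t j)‖ := by
        have he : (y t i - y t j) - (M (x t i) - M (x t j))
            = (y t i - M (x t i)) - (y t j - M (x t j)) := by abel
        rw [he]; exact norm_sub_le _ _
      have h3 : |‖M (x t i) - M (x t j)‖ - ‖x t i - x t j‖| ≤ ε * ‖x t i - x t j‖ := by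
        obtain ⟨ha, hb⟩ := hM t ht i j
        rw [abs_le]; constructor <;> nlinarith [norm_nonneg (x t i - x t j)]
      have hent : (adjMat (y t) - adjMat (x t)) i j = ‖y t i - y t j‖ - ‖x t i - x t j‖ := rfl
      rw [hent]
      calc |‖y t i - y t j‖ - ‖x t i - x t j‖|
          ≤ |‖y t i - y t j‖ - ‖M (x t i) - M (x t j)‖|
            + |‖M (x t i) - M (x t j)‖ - ‖x t i - x t j‖| := abs_sub_le _ _ _
        _ ≤ (‖y t i - M (x t i)‖ + ‖y t j - M (x t j)‖) + ε * ‖x t i - x t j‖ :=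
            add_le_add (h1.trans h2) h3
        _ ≤ (‖Z t‖ + ‖Z t‖) + ε * α := by
            have := hbd t ht i j
            have h4 := hEi i; have h5 := hEi j
            nlinarith
        _ = 2 * ‖Z t‖ + ε * α := by ring
    rw [pi_norm_le_iff_of_nonneg (by positivity)]
    intro i
    set S : ℝ := matSup (adjMat (y t) - adjMat (x t)) with hSdef
    have hsplit : Z' t i = M (f i (adjMat (y t)) - f i (adjMat (x t)))
        + (∑ j, (F i j (adjMat (y t)) - F i j (adjMat (x t))) • y t j)
        + ∑ j, F i j (adjMat (x t)) • (y t j - M (x t j)) := by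
      simp only [Z', map_sub, sub_smul, smul_sub, Finset.sum_sub_distrib]
      abel
    rw [hsplit]
    have hT1 : ‖M (f i (adjMat (y t)) - f i (adjMat (x t)))‖ ≤ ‖M‖ * (L * S) := by
      calc ‖M (f i (adjMat (y t)) - f i (adjMat (x t)))‖
          ≤ ‖M‖ * ‖f i (adjMat (y t)) - f i (adjMat (x t))‖ := M.le_opNorm _
        _ ≤ ‖M‖ * (L * S) := by
            exact mul_le_mul_of_nonneg_left (hfLip i _ _) hMnn
    have hT2 : ‖∑ j, (F i j (adjMat (y t)) - F i j (adjMat (x t))) • y t j‖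
        ≤ L'' * S * β := by
      calc ‖∑ j, (F i j (adjMat (y t)) - F i j (adjMat (x t))) • y t j‖
          ≤ ∑ j, ‖(F i j (adjMat (y t)) - F i j (adjMat (x t))) • y t j‖ :=
            norm_sum_le _ _
        _ ≤ ∑ j, |F i j (adjMat (y t)) - F i j (adjMat (x t))| * β := by
            apply Finset.sum_le_sum
            intro j _
            rw [norm_smul, Real.norm_eq_abs]
            exact mul_le_mul_of_nonneg_left (hybd t ht j) (abs_nonneg _)
        _ = (∑ j, |F i j (adjMat (y t)) - F i j (adjMat (x t))|) * β := by
            rw [Finset.sum_mul]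
        _ ≤ L'' * S * β := mul_le_mul_of_nonneg_right (hFLip i _ _) hβ.le
    have hT3 : ‖∑ j, F i j (adjMat (x t)) • (y t j - M (x t j))‖ ≤ L' * ‖Z t‖ := by
      calc ‖∑ j, F i j (adjMat (x t)) • (y t j - M (x t j))‖
          ≤ ∑ j, ‖F i j (adjMat (x t)) • (y t j - M (x t j))‖ := norm_sum_le _ _
        _ ≤ ∑ j, |F i j (adjMat (x t))| * ‖Z t‖ := by
            apply Finset.sum_le_sum
            intro j _
            rw [norm_smul, Real.norm_eq_abs]
            exact mul_le_mul_of_nonneg_left (hEi j) (abs_nonneg _)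
        _ = (∑ j, |F i j (adjMat (x t))|) * ‖Z t‖ := by rw [Finset.sum_mul]
        _ ≤ L' * ‖Z t‖ := mul_le_mul_of_nonneg_right (hFbd i _) hEnn
    calc ‖M (f i (adjMat (y t)) - f i (adjMat (x t)))
          + (∑ j, (F i j (adjMat (y t)) - F i j (adjMat (x t))) • y t j)
          + ∑ j, F i j (adjMat (x t)) • (y t j - M (x t j))‖
        ≤ ‖M (f i (adjMat (y t)) - f i (adjMat (x t)))‖
          + ‖∑ j, (F i j (adjMat (y t)) - F i j (adjMat (x t))) • y t j‖
          + ‖∑ j, F i j (adjMat (x t)) • (y t j - M (x t j))‖ := norm_add₃_le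
      _ ≤ ‖M‖ * (L * S) + L'' * S * β + L' * ‖Z t‖ := by
          exact add_le_add (add_le_add hT1 hT2) hT3
      _ ≤ K * ‖Z t‖ + c := by
          have hfac : (‖M‖ * L + L'' * β) * S ≤ (‖M‖ * L + L'' * β) * (2 * ‖Z t‖ + ε * α) :=
            mul_le_mul_of_nonneg_left hS (by positivity)
          rw [hKdef, hcdef]; nlinarith
  have hZ0 : ‖Z (0 : ℝ)‖ ≤ 0 := by
    have : Z (0 : ℝ) = 0 := by
      funext i
      simp [Z, hy0 i]
    rw [this, norm_zero]
  have hZcont : ContinuousOn Z (Icc 0 T) := fun t ht =>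
    (hZderiv t ht).continuousAt.continuousWithinAt
  have main := norm_le_gronwallBound_of_norm_deriv_right_le hZcont
    (fun t ht => (hZderiv t (Ico_subset_Icc_self ht)).hasDerivWithinAt)
    hZ0 (fun t ht => key t (Ico_subset_Icc_self ht))
  intro t ht
  have hE := main t ht
  rw [gronwallBound_of_K_ne_0 hKpos.ne'] at hE
  simp only [sub_zero, zero_mul, zero_add] at hE
  have htnn : 0 ≤ t := ht.1
  have hbound : c / K * (Real.exp (K * t) - 1) ≤ c * t * Real.exp (K * t) := by
    have h1 : Real.exp (K * t) - 1 ≤ K * t * Real.exp (K * t) :=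
      exp_sub_one_le' (by positivity)
    have h2 : c / K * (Real.exp (K * t) - 1) ≤ c / K * (K * t * Real.exp (K * t)) :=
      mul_le_mul_of_nonneg_left h1 (by positivity)
    refine h2.trans (le_of_eq ?_)
    field_simp
  have hZle : ‖Z t‖ ≤ c * t * Real.exp (K * t) := hE.trans hbound
  have hgoal : c * t * Real.exp (K * t)
      = ε * α * t * (L * ‖M‖ + L'' * β) * Real.exp ((2 * L * ‖M‖ + 2 * β * L'' + L') * t) := by
    rw [hcdef, hKdef]; ring
  rw [← hgoal]
  refine Real.iSup_le (fun i => ?_) (by positivity)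
  exact (norm_le_pi_norm (Z t) i).trans hZle

end
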